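/- Price of stability of approximate CCE: for any finite game with utilities in [0,1] that possesses at least one (exact) coarse correlated equilibrium, and for every ε ∈ [0,1], EWF(ε) ≥ ε · max_{π∈Δ(𝒜)} SW(π). Equivalently, if the optimal social welfare is positive, the ratio of the best social welfare among ε-CCEs to the optimal social welfare is at least ε. -/
import Mathlib


open Finset

/-- A probability distribution on a finite type. -/
def IsDist {X : Type*} [Fintype X] (p : X → ℝ) : Prop :=
  (∀ x, 0 ≤ p x) ∧ ∑ x, p x = 1

/-- The exploitability of a joint strategy:
`max_{i} max_{â_i ∈ 𝒜_i} E_{a∼π}[𝒰_i(â_i, a_{−i}) − 𝒰_i(a)]`. -/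
noncomputable def expl {N : ℕ} {A : Fin N → Type} [∀ i, Fintype (A i)] [∀ i, DecidableEq (A i)]
    (U : Fin N → ((i : Fin N) → A i) → ℝ) (π : ((i : Fin N) → A i) → ℝ) : ℝ :=
  sSup {x | ∃ (i : Fin N) (b : A i),
    x = ∑ a, π a * (U i (Function.update a i b) - U i a)}

/-- Social welfare: the sum of all players' expected utilities. -/
noncomputable def SW {N : ℕ} {A : Fin N → Type} [∀ i, Fintype (A i)]
    (U : Fin N → ((i : Fin N) → A i) → ℝ) (π : ((i : Fin N) → A i) → ℝ) : ℝ :=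
  ∑ i, ∑ a, π a * U i a

/-- The exploitability welfare frontier: the maximum social welfare over all `ε`-CCEs. -/
noncomputable def EWF {N : ℕ} {A : Fin N → Type} [∀ i, Fintype (A i)] [∀ i, DecidableEq (A i)]
    (U : Fin N → ((i : Fin N) → A i) → ℝ) (ε : ℝ) : ℝ :=
  sSup {x | ∃ π, IsDist π ∧ expl U π ≤ ε ∧ x = SW U π}

/-- Price of stability of approximate CCE: for any finite game with utilities in `[0,1]`
possessing a CCE, and every `ε ∈ [0,1]`, `EWF(ε) ≥ ε · max_{π∈Δ(𝒜)} SW(π)`. -/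
theorem stmt7 {N : ℕ} {A : Fin N → Type} [∀ i, Fintype (A i)] [∀ i, DecidableEq (A i)]
    [∀ i, Nonempty (A i)]
    (U : Fin N → ((i : Fin N) → A i) → ℝ) (hU : ∀ i a, U i a ∈ Set.Icc (0 : ℝ) 1)
    (hCCE : ∃ π, IsDist π ∧ expl U π ≤ 0) :
    ∀ ε ∈ Set.Icc (0 : ℝ) 1,
      ε * sSup {x | ∃ π, IsDist π ∧ x = SW U π} ≤ EWF U ε := by
  rintro ε ⟨hε0, hε1⟩
  obtain ⟨π₀, hπ₀, hexpl₀⟩ := hCCE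
  -- basic bounds on SW
  have hSWub : ∀ π, IsDist π → SW U π ≤ N := by
    intro π hπ
    have : ∀ i : Fin N, ∑ a, π a * U i a ≤ 1 := by
      intro i
      calc ∑ a, π a * U i a ≤ ∑ a, π a * 1 :=
            Finset.sum_le_sum fun a _ =>
              mul_le_mul_of_nonneg_left (hU i a).2 (hπ.1 a)
        _ = 1 := by simp [hπ.2]
    calc SW U π ≤ ∑ _i : Fin N, (1 : ℝ) := Finset.sum_le_sum fun i _ => this i
      _ = N := by simp
  have hSWlb : ∀ π, IsDist π → 0 ≤ SW U π := by
    intro π hπ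
    apply Finset.sum_nonneg
    intro i _
    exact Finset.sum_nonneg fun a _ => mul_nonneg (hπ.1 a) (hU i a).1
  have hBddE : BddAbove {x | ∃ π, IsDist π ∧ expl U π ≤ ε ∧ x = SW U π} := by
    refine ⟨N, ?_⟩
    rintro x ⟨π, hπ, _, rfl⟩
    exact hSWub π hπ
  -- exploitability set of a distribution is bounded above by 1
  have hBddExpl : ∀ π : ((i : Fin N) → A i) → ℝ, IsDist π →
      BddAbove {x | ∃ (i : Fin N) (b : A i),
        x = ∑ a, π a * (U i (Function.update a i b) - U i a)} := by
    intro π hπ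
    refine ⟨1, ?_⟩
    rintro x ⟨i, b, rfl⟩
    calc ∑ a, π a * (U i (Function.update a i b) - U i a)
        ≤ ∑ a, π a * 1 := Finset.sum_le_sum fun a _ =>
          mul_le_mul_of_nonneg_left
            (by have := (hU i (Function.update a i b)).2; have := (hU i a).1; linarith)
            (hπ.1 a)
      _ = 1 := by simp [hπ.2]
  have hEWF0 : 0 ≤ EWF U ε := by
    refine le_trans (hSWlb π₀ hπ₀) (le_csSup hBddE ⟨π₀, hπ₀, le_trans hexpl₀ hε0, rfl⟩)
  -- key step: for every distribution π₁, ε * SW U π₁ ≤ EWF U ε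
  have key : ∀ π₁, IsDist π₁ → ε * SW U π₁ ≤ EWF U ε := by
    intro π₁ hπ₁
    set π : ((i : Fin N) → A i) → ℝ := fun a => ε * π₁ a + (1 - ε) * π₀ a with hπdef
    have hπ : IsDist π := by
      constructor
      · intro a
        have h1 := hπ₁.1 a
        have h0 := hπ₀.1 a
        have : 0 ≤ 1 - ε := by linarith
        positivity
      · simp only [hπdef]
        rw [Finset.sum_add_distrib, ← Finset.mul_sum, ← Finset.mul_sum, hπ₁.2, hπ₀.2]
        ring
    have hexpl : expl U π ≤ ε := by
      apply Real.sSup_le _ hε0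
      rintro x ⟨i, b, rfl⟩
      have hsplit : ∑ a, π a * (U i (Function.update a i b) - U i a)
          = ε * ∑ a, π₁ a * (U i (Function.update a i b) - U i a)
          + (1 - ε) * ∑ a, π₀ a * (U i (Function.update a i b) - U i a) := by
        rw [Finset.mul_sum, Finset.mul_sum, ← Finset.sum_add_distrib]
        exact Finset.sum_congr rfl fun a _ => by simp only [hπdef]; ring
      rw [hsplit]
      have h1 : ∑ a, π₁ a * (U i (Function.update a i b) - U i a) ≤ 1 := by
        calc ∑ a, π₁ a * (U i (Function.update a i b) - U i a)
            ≤ ∑ a, π₁ a * 1 := Finset.sum_le_sum fun a _ =>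
              mul_le_mul_of_nonneg_left
                (by have := (hU i (Function.update a i b)).2; have := (hU i a).1; linarith)
                (hπ₁.1 a)
          _ = 1 := by simp [hπ₁.2]
      have h0 : ∑ a, π₀ a * (U i (Function.update a i b) - U i a) ≤ 0 :=
        le_trans (le_csSup (hBddExpl π₀ hπ₀) ⟨i, b, rfl⟩) hexpl₀
      nlinarith
    have hSWsplit : SW U π = ε * SW U π₁ + (1 - ε) * SW U π₀ := by
      unfold SW
      rw [Finset.mul_sum, Finset.mul_sum, ← Finset.sum_add_distrib]
      refine Finset.sum_congr rfl fun i _ => ?_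
      rw [Finset.mul_sum, Finset.mul_sum, ← Finset.sum_add_distrib]
      exact Finset.sum_congr rfl fun a _ => by simp only [hπdef]; ring
    have hmem : SW U π ≤ EWF U ε := le_csSup hBddE ⟨π, hπ, hexpl, rfl⟩
    have h0 := hSWlb π₀ hπ₀
    nlinarith
  rcases eq_or_lt_of_le hε0 with h0 | hpos
  · rw [← h0, zero_mul]; rw [← h0] at hEWF0; exact hEWF0
  · rw [mul_comm, ← le_div_iff₀ hpos]
    apply Real.sSup_le
    · rintro x ⟨π, hπd, rfl⟩
      rw [le_div_iff₀ hpos, mul_comm]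
      exact key π hπd
    · positivity
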